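/- arXiv:2402.19067 — 2 statements merged into one kernel-verified Lean document; each statement's English description precedes it below -/
import Mathlib

section
/- If Y is a locally AMUC Banach space, then for every y in the unit sphere S_Y and every t > 0 there exists δ > 0 such that limsup_n max{‖y + t z_n‖, ‖y − t z_n‖} ≥ 1 + δ for every weakly null sequence (z_n) in Y satisfying ‖z_n‖ ≥ 1 for every n ∈ ℕ. -/
open Filter Topology

/-- The asymptotic midpoint modulus `δ̃_Y(y,t)`: the supremum, over all closed
finite-codimensional subspaces `E` of `Y`, of
`inf_{z ∈ S_E} max {‖y + t z‖, ‖y - t z‖} - 1`. -/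
noncomputable def deltaTilde (Y : Type*) [NormedAddCommGroup Y] [NormedSpace ℝ Y]
    (y : Y) (t : ℝ) : ℝ :=
  sSup {r : ℝ | ∃ E : Submodule ℝ Y, IsClosed (E : Set Y) ∧ FiniteDimensional ℝ (Y ⧸ E) ∧
    r = sInf {m : ℝ | ∃ z : Y, z ∈ E ∧ ‖z‖ = 1 ∧ m = max ‖y + t • z‖ ‖y - t • z‖} - 1}

/-- A Banach space `Y` is locally asymptotically midpoint uniformly convex (locally AMUC)
if `δ̃_Y(y,t) > 0` for every `y ∈ S_Y` and every `t > 0`. -/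
def LocallyAMUC (Y : Type*) [NormedAddCommGroup Y] [NormedSpace ℝ Y] : Prop :=
  ∀ y : Y, ‖y‖ = 1 → ∀ t : ℝ, 0 < t → 0 < deltaTilde Y y t

/-- Convexity estimate: for `0 ≤ a ≤ 1`, `‖y + a • w‖ ≤ max ‖y + w‖ ‖y - w‖`. -/
lemma aux_convex {Y : Type*} [NormedAddCommGroup Y] [NormedSpace ℝ Y]
    (y w : Y) {a : ℝ} (h0 : 0 ≤ a) (h1 : a ≤ 1) :
    ‖y + a • w‖ ≤ max ‖y + w‖ ‖y - w‖ := by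
  have hrw : y + a • w = ((1 + a) / 2) • (y + w) + ((1 - a) / 2) • (y - w) := by
    module
  rw [hrw]
  calc ‖((1 + a) / 2) • (y + w) + ((1 - a) / 2) • (y - w)‖
      ≤ ((1 + a) / 2) * ‖y + w‖ + ((1 - a) / 2) * ‖y - w‖ := by
        refine (norm_add_le _ _).trans ?_
        rw [norm_smul, norm_smul, Real.norm_of_nonneg (by linarith),
          Real.norm_of_nonneg (by linarith)]
    _ ≤ ((1 + a) / 2) * max ‖y + w‖ ‖y - w‖ + ((1 - a) / 2) * max ‖y + w‖ ‖y - w‖ := by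
        have hm1 := le_max_left ‖y + w‖ ‖y - w‖
        have hm2 := le_max_right ‖y + w‖ ‖y - w‖
        have c1 : (0:ℝ) ≤ (1 + a) / 2 := by linarith
        have c2 : (0:ℝ) ≤ (1 - a) / 2 := by linarith
        have := mul_le_mul_of_nonneg_left hm1 c1
        have := mul_le_mul_of_nonneg_left hm2 c2
        linarith
    _ = max ‖y + w‖ ‖y - w‖ := by ring

/-- If `Y` is locally AMUC, then for every `y ∈ S_Y` and `t > 0` there is
`δ > 0` with `limsup max {‖y + t zₙ‖, ‖y - t zₙ‖} ≥ 1 + δ` for every weakly null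
sequence `(zₙ)` with `‖zₙ‖ ≥ 1` for all `n`. -/
theorem locallyAMUC_limsup (Y : Type*) [NormedAddCommGroup Y] [NormedSpace ℝ Y]
    [CompleteSpace Y] (hY : LocallyAMUC Y) :
    ∀ y : Y, ‖y‖ = 1 → ∀ t : ℝ, 0 < t → ∃ δ : ℝ, 0 < δ ∧
      ∀ z : ℕ → Y,
        (∀ f : Y →L[ℝ] ℝ, Tendsto (fun n => f (z n)) atTop (𝓝 0)) →
        (∀ n : ℕ, 1 ≤ ‖z n‖) →
        1 + δ ≤ limsup (fun n => max ‖y + t • z n‖ ‖y - t • z n‖) atTop := by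
  intro y hy t ht
  have hpos := hY y hy t ht
  rw [deltaTilde] at hpos
  -- extract a positive element of the set
  have hex : ∃ r ∈ {r : ℝ | ∃ E : Submodule ℝ Y, IsClosed (E : Set Y) ∧
      FiniteDimensional ℝ (Y ⧸ E) ∧
      r = sInf {m : ℝ | ∃ z : Y, z ∈ E ∧ ‖z‖ = 1 ∧ m = max ‖y + t • z‖ ‖y - t • z‖} - 1},
      0 < r := by
    by_contra h
    push_neg at h
    exact absurd (Real.sSup_nonpos fun x hx => h x hx) (by linarith)
  obtain ⟨r, ⟨E, hEc, hEfd, hrdef⟩, hr⟩ := hex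
  haveI : IsClosed (E : Set Y) := hEc
  haveI : FiniteDimensional ℝ (Y ⧸ E) := hEfd
  -- key estimate on the unit sphere of E
  have hinf : ∀ u : Y, u ∈ E → ‖u‖ = 1 → 1 + r ≤ max ‖y + t • u‖ ‖y - t • u‖ := by
    intro u hu hu1
    have hbdd : BddBelow {m : ℝ | ∃ z : Y, z ∈ E ∧ ‖z‖ = 1 ∧
        m = max ‖y + t • z‖ ‖y - t • z‖} := by
      refine ⟨0, ?_⟩
      rintro m ⟨w, -, -, rfl⟩
      exact le_max_of_le_left (norm_nonneg _)
    have hmem : max ‖y + t • u‖ ‖y - t • u‖ ∈ {m : ℝ | ∃ z : Y, z ∈ E ∧ ‖z‖ = 1 ∧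
        m = max ‖y + t • z‖ ‖y - t • z‖} := ⟨u, hu, hu1, rfl⟩
    have := csInf_le hbdd hmem
    linarith
  -- the quotient map as a continuous linear map
  let π : Y →L[ℝ] (Y ⧸ E) :=
    LinearMap.mkContinuous E.mkQ 1 (fun x => by
      simpa using Submodule.Quotient.norm_mk_le E x)
  refine ⟨r / 2, by linarith, ?_⟩
  intro z hz hz1
  have hzpos : ∀ n, (0 : ℝ) < ‖z n‖ := fun n => lt_of_lt_of_le one_pos (hz1 n)
  -- the quotient images tend to zero in norm (finite dimensional quotient)
  have hq : Tendsto (fun n => π (z n)) atTop (𝓝 0) := by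
    let φ : (Y ⧸ E) ≃L[ℝ] (Fin (Module.finrank ℝ (Y ⧸ E)) → ℝ) :=
      (Module.finBasis ℝ (Y ⧸ E)).equivFun.toContinuousLinearEquiv
    have h1 : Tendsto (fun n => φ (π (z n))) atTop (𝓝 0) := by
      rw [tendsto_pi_nhds]
      intro i
      have := hz ((ContinuousLinearMap.proj i).comp
        ((φ : (Y ⧸ E) →L[ℝ] (Fin (Module.finrank ℝ (Y ⧸ E)) → ℝ)).comp π))
      simpa using this
    have h2 := (φ.symm.continuous.tendsto 0).comp h1
    simpa [Function.comp_def] using h2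
  -- unit vectors in the direction of `z n`
  set ν : ℕ → Y := fun n => ‖z n‖⁻¹ • z n with hν
  have hνnorm : ∀ n, ‖ν n‖ = 1 := by
    intro n
    rw [hν]
    simp only [norm_smul, norm_inv, norm_norm]
    exact inv_mul_cancel₀ (hzpos n).ne'
  -- near points in E
  have hexch : ∀ n : ℕ, ∃ e : Y, e ∈ E ∧
      ‖ν n - e‖ < ‖π (ν n)‖ + 1 / (n + 1) := by
    intro n
    obtain ⟨m, hm, hlt⟩ := Submodule.Quotient.norm_mk_lt (π (ν n))
      (show (0 : ℝ) < 1 / (n + 1) by positivity)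
    refine ⟨ν n - m, ?_, ?_⟩
    · have hmk : (Submodule.Quotient.mk (ν n - m) : Y ⧸ E) = 0 := by
        have : (Submodule.Quotient.mk (ν n) : Y ⧸ E) = Submodule.Quotient.mk m := hm.symm
        rw [Submodule.Quotient.mk_sub, this, sub_self]
      exact (Submodule.Quotient.mk_eq_zero E).mp hmk
    · simpa using hlt
  choose e he hee using hexch
  set ε : ℕ → ℝ := fun n => ‖π (ν n)‖ + 1 / (n + 1) with hε
  clear_value ε
  -- ε → 0
  have hεto0 : Tendsto ε atTop (𝓝 0) := by
    have hπν : Tendsto (fun n => ‖π (ν n)‖) atTop (𝓝 0) := by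
      have hπz : Tendsto (fun n => ‖π (z n)‖) atTop (𝓝 0) := by
        simpa using hq.norm
      refine tendsto_of_tendsto_of_tendsto_of_le_of_le tendsto_const_nhds hπz
        (fun n => norm_nonneg (π (ν n))) ?_
      intro n
      show ‖π (ν n)‖ ≤ ‖π (z n)‖
      have : π (ν n) = ‖z n‖⁻¹ • π (z n) := by rw [hν]; simp
      rw [this, norm_smul, norm_inv, norm_norm]
      calc ‖z n‖⁻¹ * ‖π (z n)‖ ≤ 1 * ‖π (z n)‖ :=
            mul_le_mul_of_nonneg_right (inv_le_one_of_one_le₀ (hz1 n)) (norm_nonneg _)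
        _ = ‖π (z n)‖ := one_mul _
    have h2 : Tendsto (fun n : ℕ => 1 / ((n : ℝ) + 1)) atTop (𝓝 0) :=
      tendsto_one_div_add_atTop_nhds_zero_nat
    rw [hε]
    simpa using hπν.add h2
  -- eventually ε is small
  have hεsmall : ∀ᶠ n in atTop, ε n < min (1 / 2) (r / (4 * t)) := by
    refine hεto0.eventually_lt_const ?_
    have h1 : (0 : ℝ) < 1 / 2 := by norm_num
    have h2 : (0 : ℝ) < r / (4 * t) := by positivity
    exact lt_min h1 h2
  -- boundedness of the sequence via Banach–Steinhaus
  obtain ⟨C, hC⟩ : ∃ C, ∀ n, ‖z n‖ ≤ C := by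
    set g : ℕ → (Y →L[ℝ] ℝ) →L[ℝ] ℝ :=
      fun n => NormedSpace.inclusionInDoubleDual ℝ Y (z n) with hg
    have hpt : ∀ f : Y →L[ℝ] ℝ, ∃ C, ∀ n, ‖g n f‖ ≤ C := by
      intro f
      have hb : BddAbove (Set.range fun n => ‖f (z n)‖) := by
        have : Tendsto (fun n => ‖f (z n)‖) atTop (𝓝 0) := by
          simpa using (hz f).norm
        exact this.bddAbove_range
      obtain ⟨C, hCb⟩ := hb
      refine ⟨C, fun n => ?_⟩
      have : ‖f (z n)‖ ≤ C := hCb ⟨n, rfl⟩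
      simpa [hg, NormedSpace.dual_def] using this
    obtain ⟨C', hC'⟩ := banach_steinhaus hpt
    refine ⟨C', fun n => ?_⟩
    have := hC' n
    rwa [show ‖g n‖ = ‖z n‖ from
      (NormedSpace.inclusionInDoubleDualLi (𝕜 := ℝ) (E := Y)).norm_map (z n)] at this
  -- the sequence of maxima is bounded above
  have hBdd : IsBoundedUnder (· ≤ ·) atTop
      (fun n => max ‖y + t • z n‖ ‖y - t • z n‖) := by
    refine isBoundedUnder_of ⟨1 + t * C, fun n => ?_⟩
    have h1 : ‖y + t • z n‖ ≤ 1 + t * C := by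
      calc ‖y + t • z n‖ ≤ ‖y‖ + ‖t • z n‖ := norm_add_le _ _
        _ = 1 + t * ‖z n‖ := by rw [hy, norm_smul, Real.norm_of_nonneg ht.le]
        _ ≤ 1 + t * C := by have := hC n; nlinarith
    have h2 : ‖y - t • z n‖ ≤ 1 + t * C := by
      calc ‖y - t • z n‖ ≤ ‖y‖ + ‖t • z n‖ := norm_sub_le _ _
        _ = 1 + t * ‖z n‖ := by rw [hy, norm_smul, Real.norm_of_nonneg ht.le]
        _ ≤ 1 + t * C := by have := hC n; nlinarith
    exact max_le h1 h2
  -- the main eventual lower bound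
  have hev : ∀ᶠ n in atTop, 1 + r / 2 ≤ max ‖y + t • z n‖ ‖y - t • z n‖ := by
    filter_upwards [hεsmall] with n hn
    have hε0 : 0 < ε n := by
      rw [hε]
      have : (0:ℝ) < 1 / (n+1) := by positivity
      have := norm_nonneg (π (ν n))
      linarith
    have hεhalf : ε n ≤ 1 / 2 := (le_of_lt (lt_of_lt_of_le hn (min_le_left _ _)))
    have hεr : ε n ≤ r / (4 * t) := (le_of_lt (lt_of_lt_of_le hn (min_le_right _ _)))
    have hen : ‖ν n - e n‖ < ε n := by rw [hε]; exact hee n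
    -- ‖e n‖ ≥ 1/2
    have hne : (1 : ℝ) / 2 ≤ ‖e n‖ := by
      have h1 : ‖ν n‖ ≤ ‖ν n - e n‖ + ‖e n‖ := by
        calc ‖ν n‖ = ‖(ν n - e n) + e n‖ := by congr 1; abel
        _ ≤ ‖ν n - e n‖ + ‖e n‖ := norm_add_le _ _
      rw [hνnorm n] at h1
      linarith
    have hne0 : ‖e n‖ ≠ 0 := by positivity
    set u : Y := ‖e n‖⁻¹ • e n with hu
    have huE : u ∈ E := E.smul_mem _ (he n)
    have hu1 : ‖u‖ = 1 := by
      rw [hu, norm_smul, norm_inv, norm_norm]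
      exact inv_mul_cancel₀ hne0
    -- ‖ν n - u‖ ≤ 2 ε n
    have hdiff : ‖ν n - u‖ ≤ 2 * ε n := by
      have h1 : ‖e n - u‖ = |‖e n‖ - 1| := by
        have : e n - u = (1 - ‖e n‖⁻¹) • e n := by
          rw [hu]; module
        rw [this, norm_smul, Real.norm_eq_abs, ← abs_of_nonneg (norm_nonneg (e n)),
          ← abs_mul]
        congr 1
        field_simp
        rw [abs_of_nonneg (norm_nonneg (e n))]; ring
      have h2 : |‖e n‖ - 1| ≤ ε n := by
        have h3 : |‖e n‖ - ‖ν n‖| ≤ ‖e n - ν n‖ := abs_norm_sub_norm_le _ _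
        rw [hνnorm n, norm_sub_rev] at h3
        linarith
      calc ‖ν n - u‖ = ‖(ν n - e n) + (e n - u)‖ := by congr 1; abel
        _ ≤ ‖ν n - e n‖ + ‖e n - u‖ := norm_add_le _ _
        _ ≤ ε n + ε n := by rw [h1]; linarith
        _ = 2 * ε n := by ring
    -- lower bound for max over ν n
    have hmaxu : 1 + r ≤ max ‖y + t • u‖ ‖y - t • u‖ := hinf u huE hu1
    have h1 : ‖y + t • u‖ ≤ ‖y + t • ν n‖ + t * (2 * ε n) := by
      have hrw : y + t • u = (y + t • ν n) + t • (u - ν n) := by module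
      rw [hrw]
      refine (norm_add_le _ _).trans ?_
      have : ‖t • (u - ν n)‖ ≤ t * (2 * ε n) := by
        rw [norm_smul, Real.norm_of_nonneg ht.le, norm_sub_rev]
        exact mul_le_mul_of_nonneg_left hdiff ht.le
      linarith
    have h2 : ‖y - t • u‖ ≤ ‖y - t • ν n‖ + t * (2 * ε n) := by
      have hrw : y - t • u = (y - t • ν n) + t • (ν n - u) := by module
      rw [hrw]
      refine (norm_add_le _ _).trans ?_
      have : ‖t • (ν n - u)‖ ≤ t * (2 * ε n) := by
        rw [norm_smul, Real.norm_of_nonneg ht.le]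
        exact mul_le_mul_of_nonneg_left hdiff ht.le
      linarith
    have hmaxν : 1 + r - t * (2 * ε n) ≤ max ‖y + t • ν n‖ ‖y - t • ν n‖ := by
      have := max_le (h1.trans (add_le_add_left (le_max_left _ _) _))
        (h2.trans (add_le_add_left (le_max_right _ _) _))
      linarith
    have htε : t * (2 * ε n) ≤ r / 2 := by
      have ht' : t ≠ 0 := ne_of_gt ht
      have h4 : t * (2 * ε n) ≤ t * (2 * (r / (4 * t))) := by gcongr
      have h5 : t * (2 * (r / (4 * t))) = r / 2 := by field_simp; ring
      linarith
    -- convexity step: pass from ν n to z n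
    have ha0 : (0:ℝ) ≤ ‖z n‖⁻¹ := by positivity
    have ha1 : ‖z n‖⁻¹ ≤ 1 := inv_le_one_of_one_le₀ (hz1 n)
    have hsmul : t • ν n = ‖z n‖⁻¹ • (t • z n) := by
      rw [hν]
      exact smul_comm t (‖z n‖⁻¹) (z n)
    have hstep1 : ‖y + t • ν n‖ ≤ max ‖y + t • z n‖ ‖y - t • z n‖ := by
      rw [hsmul]
      exact aux_convex y (t • z n) ha0 ha1
    have hstep2 : ‖y - t • ν n‖ ≤ max ‖y + t • z n‖ ‖y - t • z n‖ := by
      have hrw : y - t • ν n = y + ‖z n‖⁻¹ • (-(t • z n)) := by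
        rw [smul_neg, ← hsmul]; abel
      rw [hrw]
      have := aux_convex y (-(t • z n)) ha0 ha1
      calc ‖y + ‖z n‖⁻¹ • -(t • z n)‖ ≤ max ‖y + -(t • z n)‖ ‖y - -(t • z n)‖ := this
        _ = max ‖y - t • z n‖ ‖y + t • z n‖ := by rw [sub_neg_eq_add, ← sub_eq_add_neg]
        _ = max ‖y + t • z n‖ ‖y - t • z n‖ := max_comm _ _
    have : max ‖y + t • ν n‖ ‖y - t • ν n‖ ≤ max ‖y + t • z n‖ ‖y - t • z n‖ :=
      max_le hstep1 hstep2
    linarith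
  -- conclude via limsup
  exact le_limsup_of_frequently_le hev.frequently hBdd
end

section
/- Let w be an admissible sequence and let d_*(w) be the associated predual of a Lorentz sequence space. For every x in the unit sphere of d_*(w), there exist m ∈ ℕ and δ ∈ (0,1) such that ‖x + λ e_n‖ ≤ 1 for every n ≥ m and every scalar λ with |λ| ≤ δ. -/
open Filter Topology

/-- `rearrSum x n = ∑_{k=1}^n x̃_k`, the sum of the `n` largest values of `(|x_k|)`,
i.e. the `n`-th partial sum of the nonincreasing rearrangement of `(|x_k|)`; it is the
supremum of `∑_{k ∈ A} |x_k|` over finite sets `A ⊆ ℕ` of cardinality `n`. -/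
noncomputable def rearrSum (x : ℕ → ℝ) (n : ℕ) : ℝ :=
  sSup ((fun A : Finset ℕ => ∑ k ∈ A, |x k|) '' {A : Finset ℕ | A.card = n})

/-- A sequence of positive reals is admissible if it is nonincreasing, starts at `1`,
tends to `0` and is not summable. -/
def Admissible (w : ℕ → ℝ) : Prop :=
  (∀ n, 0 < w n) ∧ (∀ n, w (n + 1) ≤ w n) ∧ w 0 = 1 ∧
    Tendsto w atTop (𝓝 0) ∧ ¬ Summable w

/-- The underlying set of sequences of `d_*(w)`: sequences `x ∈ c₀` with
`(∑_{k=1}^n x̃_k) / (∑_{k=1}^n w_k) → 0`. -/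
def dStarSet (w : ℕ → ℝ) : Set (ℕ → ℝ) :=
  {x | Tendsto x atTop (𝓝 0) ∧
    Tendsto (fun n => rearrSum x n / ∑ k ∈ Finset.range n, w k) atTop (𝓝 0)}

/-- The norm of `d_*(w)`: `‖x‖ = sup_n (∑_{k=1}^n x̃_k) / (∑_{k=1}^n w_k)`. -/
noncomputable def dStarNorm (w : ℕ → ℝ) (x : ℕ → ℝ) : ℝ :=
  ⨆ n : ℕ, rearrSum x n / ∑ k ∈ Finset.range n, w k

/-- A normed space `D` is a representation of `d_*(w)` if there is a linear bijection `j`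
from `D` onto the set of sequences of `d_*(w)` carrying the norm of `D` to the norm of
`d_*(w)`; i.e. `D` "is" the space `d_*(w)` endowed with its canonical norm. -/
def IsDStarRep (w : ℕ → ℝ) (D : Type*) [NormedAddCommGroup D] [NormedSpace ℝ D]
    (j : D →ₗ[ℝ] (ℕ → ℝ)) : Prop :=
  Function.Injective j ∧ Set.range j = dStarSet w ∧ ∀ x : D, ‖x‖ = dStarNorm w (j x)

lemma rearrSum_zero (x : ℕ → ℝ) : rearrSum x 0 = 0 := by
  have h : {A : Finset ℕ | A.card = 0} = {∅} := by
    ext A; simp [Finset.card_eq_zero]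
  simp [rearrSum, h]

lemma rearrSum_le (x : ℕ → ℝ) (n : ℕ) (a : ℝ) (ha : 0 ≤ a)
    (h : ∀ A : Finset ℕ, A.card = n → ∑ k ∈ A, |x k| ≤ a) : rearrSum x n ≤ a := by
  apply Real.sSup_le _ ha
  rintro _ ⟨A, hA, rfl⟩
  exact h A hA

lemma sum_le_rearrSum (x : ℕ → ℝ) (B : ℝ) (hB : ∀ k, |x k| ≤ B) {n : ℕ}
    {A : Finset ℕ} (hA : A.card = n) : ∑ k ∈ A, |x k| ≤ rearrSum x n := by
  refine le_csSup ⟨n * B, ?_⟩ ⟨A, hA, rfl⟩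
  rintro _ ⟨C, hC, rfl⟩
  calc ∑ k ∈ C, |x k| ≤ ∑ k ∈ C, B := Finset.sum_le_sum fun k _ => hB k
    _ = n * B := by rw [Finset.sum_const, hC]; ring

/-- for every `x` in the unit sphere of `d_*(w)`, there are `m ∈ ℕ` and
`δ ∈ (0,1)` such that `‖x + λ e_n‖ ≤ 1` for every `n ≥ m` and every scalar `λ` with
`|λ| ≤ δ`, where `e_n` is the `n`-th unit vector. -/
theorem dStar_extreme_point_lemma (w : ℕ → ℝ) (hw : Admissible w)
    (x : ℕ → ℝ) (hx : x ∈ dStarSet w) (hx1 : dStarNorm w x = 1) :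
    ∃ m : ℕ, ∃ δ : ℝ, 0 < δ ∧ δ < 1 ∧
      ∀ n : ℕ, m ≤ n → ∀ lam : ℝ, |lam| ≤ δ →
        dStarNorm w (x + lam • (Pi.single n 1 : ℕ → ℝ)) ≤ 1 := by
  obtain ⟨hw0, hw1, hw01, hwt, hws⟩ := hw
  have hwanti : Antitone w := antitone_nat_of_succ_le hw1
  set S : ℕ → ℝ := fun n => ∑ k ∈ Finset.range n, w k with hSdef
  have hS1 : ∀ j, 1 ≤ j → 1 ≤ S j := by
    intro j hj
    have h0 : w 0 ≤ S j :=
      Finset.single_le_sum (fun i _ => (hw0 i).le) (Finset.mem_range.mpr hj)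
    rw [hw01] at h0; exact h0
  have hSpos : ∀ j, 1 ≤ j → 0 < S j := fun j hj => lt_of_lt_of_le one_pos (hS1 j hj)
  have hSsucc : ∀ i, S (i + 1) = S i + w i := by
    intro i; simp [hSdef, Finset.sum_range_succ]
  -- x is bounded
  have habs : Tendsto (fun k => |x k|) atTop (𝓝 0) := by
    simpa using hx.1.abs
  obtain ⟨B, hBmem⟩ := habs.bddAbove_range
  have hB : ∀ k, |x k| ≤ B := fun k => hBmem ⟨k, rfl⟩
  -- the ratios
  set r : ℕ → ℝ := fun n => rearrSum x n / S n with hrdef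
  have hrt : Tendsto r atTop (𝓝 0) := hx.2
  have hrb : BddAbove (Set.range r) := hrt.bddAbove_range
  have hr1 : ∀ n, r n ≤ 1 := by
    intro n
    have := le_ciSup hrb n
    rw [show ⨆ n, r n = dStarNorm w x from rfl, hx1] at this
    exact this
  have hrS : ∀ j, rearrSum x j ≤ S j := by
    intro j
    rcases Nat.eq_zero_or_pos j with hj | hj
    · subst hj; simp [rearrSum_zero, hSdef]
    · exact (div_le_one (hSpos j hj)).mp (hr1 j)
  -- N beyond which r < 1/2
  obtain ⟨N, hN⟩ := eventually_atTop.mp (hrt.eventually_lt_const (by norm_num : (0:ℝ) < 1/2))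
  -- θ
  set T : Finset ℝ :=
    insert (1/2 : ℝ) (((Finset.range N).filter (fun j => ¬ (r j = 1))).image r) with hTdef
  have hTne : T.Nonempty := ⟨1/2, Finset.mem_insert_self _ _⟩
  set θ : ℝ := T.max' hTne with hθdef
  have hθhalf : (1/2 : ℝ) ≤ θ := Finset.le_max' _ _ (Finset.mem_insert_self _ _)
  have hθ1 : θ < 1 := by
    rw [hθdef, Finset.max'_lt_iff]
    intro b hb
    rcases Finset.mem_insert.mp hb with hb | hb
    · rw [hb]; norm_num
    · obtain ⟨j, hj, rfl⟩ := Finset.mem_image.mp hb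
      have := (Finset.mem_filter.mp hj).2
      exact lt_of_le_of_ne (hr1 j) this
  have hθle : ∀ j, r j ≠ 1 → r j ≤ θ := by
    intro j hj
    rcases lt_or_ge j N with h | h
    · exact Finset.le_max' _ _ (Finset.mem_insert_of_mem
        (Finset.mem_image_of_mem r (Finset.mem_filter.mpr ⟨Finset.mem_range.mpr h, hj⟩)))
    · exact le_trans (hN j h).le hθhalf
  -- δ and m
  set δ : ℝ := min (w N / 2) ((1 - θ) / 2) with hδdef
  have hδpos : 0 < δ := lt_min (half_pos (hw0 N)) (half_pos (by linarith))
  have hδ1 : δ < 1 := by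
    have : w N ≤ 1 := hw01 ▸ hwanti (Nat.zero_le N)
    calc δ ≤ w N / 2 := min_le_left _ _
      _ < 1 := by linarith
  obtain ⟨m, hm⟩ := eventually_atTop.mp (habs.eventually_lt_const (half_pos (hw0 N)))
  refine ⟨m, δ, hδpos, hδ1, ?_⟩
  intro n hn lam hlam
  set y : ℕ → ℝ := x + lam • (Pi.single n 1 : ℕ → ℝ) with hydef
  have hyne : ∀ k, k ≠ n → y k = x k := by
    intro k hk
    simp [hydef, Pi.single_eq_of_ne hk]
  have hyn : y n = x n + lam := by
    simp [hydef, Pi.single_eq_same]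
  have hxn : |x n| ≤ w N / 2 := (hm n hn).le
  have hlam2 : |lam| ≤ w N / 2 := le_trans hlam (min_le_left _ _)
  have hlam3 : |lam| ≤ 1 - θ := le_trans hlam (le_trans (min_le_right _ _) (by linarith))
  -- the key bound
  apply ciSup_le
  intro j
  rcases Nat.eq_zero_or_pos j with hj | hj
  · subst hj; simp [rearrSum_zero]
  rw [div_le_one (hSpos j hj)]
  apply rearrSum_le _ _ _ (hSpos j hj).le
  intro A hA
  by_cases h1 : r j = 1
  · -- j is a norming index; use smallness of |x n| and |lam|
    have hjN : j < N := by
      by_contra h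
      exact absurd h1 (ne_of_lt (lt_of_lt_of_le (hN j (le_of_not_gt h)) (by norm_num)))
    by_cases hnA : n ∈ A
    · obtain ⟨i, rfl⟩ : ∃ i, j = i + 1 := ⟨j - 1, (Nat.succ_pred_eq_of_pos hj).symm⟩
      have hcard : (A.erase n).card = i := by
        rw [Finset.card_erase_of_mem hnA, hA]
        omega
      have h2 : ∑ k ∈ A.erase n, |y k| = ∑ k ∈ A.erase n, |x k| := by
        apply Finset.sum_congr rfl
        intro k hk
        rw [hyne k (Finset.ne_of_mem_erase hk)]
      have h3 : ∑ k ∈ A.erase n, |x k| ≤ S i :=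
        le_trans (sum_le_rearrSum x B hB hcard) (hrS i)
      have h4 : |y n| ≤ w i := by
        have : |y n| ≤ |x n| + |lam| := hyn ▸ abs_add_le _ _
        have hwi : w N ≤ w i := hwanti (by omega)
        linarith
      calc ∑ k ∈ A, |y k| = |y n| + ∑ k ∈ A.erase n, |y k| :=
            (Finset.add_sum_erase A _ hnA).symm
        _ ≤ w i + S i := by rw [h2]; exact add_le_add h4 h3
        _ = S (i + 1) := by rw [hSsucc]; ring
    · have h2 : ∑ k ∈ A, |y k| = ∑ k ∈ A, |x k| := by
        apply Finset.sum_congr rfl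
        intro k hk
        rw [hyne k (fun h => hnA (h ▸ hk))]
      rw [h2]
      exact le_trans (sum_le_rearrSum x B hB hA) (hrS j)
  · -- non-norming index: use r j ≤ θ < 1
    have hθj : rearrSum x j ≤ θ * S j := by
      have := hθle j h1
      rw [hrdef] at this
      calc rearrSum x j = r j * S j := by
            show rearrSum x j = rearrSum x j / S j * S j
            rw [div_mul_cancel₀ _ (hSpos j hj).ne']
        _ ≤ θ * S j := mul_le_mul_of_nonneg_right (hθle j h1) (hSpos j hj).le
    have hterm : ∀ k ∈ A, |y k| ≤ |x k| + (if k = n then |lam| else 0) := by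
      intro k _
      by_cases hk : k = n
      · subst hk; rw [hyn]; simpa using abs_add_le (x k) lam
      · rw [hyne k hk]; simp [hk]
    calc ∑ k ∈ A, |y k| ≤ ∑ k ∈ A, (|x k| + if k = n then |lam| else 0) :=
          Finset.sum_le_sum hterm
      _ = ∑ k ∈ A, |x k| + ∑ k ∈ A, (if k = n then |lam| else 0) :=
          Finset.sum_add_distrib
      _ ≤ θ * S j + (1 - θ) * S j := by
          apply add_le_add (le_trans (sum_le_rearrSum x B hB hA) hθj)
          have h5 : ∑ k ∈ A, (if k = n then |lam| else 0) ≤ |lam| := by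
            rw [Finset.sum_ite_eq' A n (fun _ => |lam|)]
            split <;> simp [abs_nonneg]
          calc ∑ k ∈ A, (if k = n then |lam| else 0) ≤ |lam| := h5
            _ ≤ 1 - θ := hlam3
            _ ≤ (1 - θ) * S j := le_mul_of_one_le_right (by linarith) (hS1 j hj)
      _ = S j := by ring
end
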